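/- Let f : H → G be a surjective group homomorphism, let G act on an abelian group A, and let h : G × G → A be a 2-cocycle. If the only homomorphism from ker(f) to A is trivial and the pulled-back 2-cocycle h' = h∘(f,f) : H × H → A is split, then h is split. -/

import Mathlib

/-- Let `f : H → G` be a surjective homomorphism, `G` acting on `A`, and
`h : G × G → A` a 2-cocycle. If the only homomorphism from `ker f` to `A` is trivial
and the pulled-back 2-cocycle `h∘(f,f)` on `H` is split, then `h` is split. -/
theorem statement9 {G H A : Type*} [Group G] [Group H] [AddCommGroup A]
    [DistribMulAction G A]
    (f : H →* G) (hf : Function.Surjective f)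
    (h : G → G → A)
    (hcoc : ∀ g₁ g₂ g₃ : G, h g₁ g₂ + h (g₁ * g₂) g₃ = h g₁ (g₂ * g₃) + g₁ • h g₂ g₃)
    (hl : ∀ g : G, h 1 g = 0) (hr : ∀ g : G, h g 1 = 0)
    (htriv : ∀ φ : H → A,
      (∀ x ∈ f.ker, ∀ y ∈ f.ker, φ (x * y) = φ x + φ y) → ∀ x ∈ f.ker, φ x = 0)
    (hsplit : ∃ F : H → A, F 1 = 0 ∧
      ∀ x y : H, h (f x) (f y) = F x + f x • F y - F (x * y)) :
    ∃ g : G → A, g 1 = 0 ∧ ∀ x y : G, h x y = g x + x • g y - g (x * y) := by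
  obtain ⟨F, hF1, hFeq⟩ := hsplit
  have hker : ∀ x ∈ f.ker, F x = 0 := by
    apply htriv
    intro x hx y hy
    have hx1 : f x = 1 := MonoidHom.mem_ker.mp hx
    have := hFeq x y
    rw [hx1, hl, one_smul] at this
    exact (sub_eq_zero.mp this.symm).symm
  have hfiber : ∀ (x k : H), k ∈ f.ker → F (x * k) = F x := by
    intro x k hk
    have hk1 : f k = 1 := MonoidHom.mem_ker.mp hk
    have := hFeq x k
    rw [hk1, hr, hker k hk, smul_zero, add_zero] at this
    exact (sub_eq_zero.mp this.symm).symm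
  set s := Function.surjInv hf with hs
  have hfs : ∀ x, f (s x) = x := fun x => Function.surjInv_eq hf x
  refine ⟨fun x => F (s x), ?_, ?_⟩
  · exact hker (s 1) (MonoidHom.mem_ker.mpr (hfs 1))
  · intro x y
    have hc : F (s x * s y) = F (s (x * y)) := by
      have hmem : (s (x * y))⁻¹ * (s x * s y) ∈ f.ker := by
        rw [MonoidHom.mem_ker]
        simp [hfs]
      calc F (s x * s y) = F (s (x * y) * ((s (x * y))⁻¹ * (s x * s y))) := by
            group
          _ = F (s (x * y)) := hfiber _ _ hmem
    have := hFeq (s x) (s y)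
    rw [hfs, hfs, hc] at this
    exact this
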